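/- Let G be a finite group whose order is coprime to 6, acting faithfully, transitively and nonregularly (i.e. some point stabilizer is nontrivial) on a finite set Ω, such that every element of G fixing at least four distinct points of Ω is the identity. Then the action of G on Ω is a Frobenius action: every nontrivial element of G fixes at most one point of Ω. -/

import Mathlib

open Pointwise

section FrobeniusAux

variable {G : Type*} [Group G] [Finite G] {Ω : Type*} [MulAction G Ω]

private lemma pow_smul_fix' {x : G} {ω : Ω} (h : x • ω = ω) : ∀ i : ℕ, x ^ i • ω = ω := by
  intro i
  induction i with
  | zero => simp
  | succ n ih => rw [pow_succ, mul_smul, h, ih]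

private lemma smul_eq_of_pow_smul_eq' (hcop : Nat.Coprime (Nat.card G) 6)
    {x : G} {ω : Ω} {δ : ℕ} (hδ : δ = 1 ∨ δ = 2 ∨ δ = 3) (h : x ^ δ • ω = ω) :
    x • ω = ω := by
  rcases eq_or_ne x 1 with rfl | hx1
  · simp
  have hm6 : Nat.Coprime (orderOf x) 6 :=
    Nat.Coprime.coprime_dvd_left (orderOf_dvd_natCard x) hcop
  have hδ6 : δ ∣ 6 := by rcases hδ with rfl | rfl | rfl <;> decide
  have hmδ : Nat.Coprime δ (orderOf x) := (hm6.coprime_dvd_right hδ6).symm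
  have hpos : 0 < orderOf x := orderOf_pos x
  have hne1 : orderOf x ≠ 1 := fun h' => hx1 (orderOf_eq_one_iff.mp h')
  have hm1 : 1 < orderOf x := by omega
  obtain ⟨r, -, hr⟩ := Nat.exists_mul_mod_eq_one_of_coprime hmδ hm1
  have hpow : x ^ (δ * r) • ω = ω := by
    rw [pow_mul]
    exact pow_smul_fix' h r
  calc x • ω = x ^ (δ * r % orderOf x) • ω := by rw [hr, pow_one]
    _ = x ^ (δ * r) • ω := by rw [pow_mod_orderOf]
    _ = ω := hpow

private lemma core_fix' (hcop : Nat.Coprime (Nat.card G) 6)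
    (h4 : ∀ g : G, ∀ a b c d : Ω, a ≠ b → a ≠ c → a ≠ d → b ≠ c → b ≠ d → c ≠ d →
        g • a = a → g • b = b → g • c = c → g • d = d → g = 1)
    {x y : G} {ω : Ω} (hy : y ≠ 1)
    (hfix : ∀ i : ℕ, y • (x ^ i • ω) = x ^ i • ω) : x • ω = ω := by
  by_contra h01
  by_cases h02 : x ^ 2 • ω = ω
  · exact h01 (smul_eq_of_pow_smul_eq' hcop (Or.inr (Or.inl rfl)) h02)
  by_cases h03 : x ^ 3 • ω = ω
  · exact h01 (smul_eq_of_pow_smul_eq' hcop (Or.inr (Or.inr rfl)) h03)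
  by_cases h12 : x ^ 2 • ω = x • ω
  · apply h01
    have h' : x • (x • ω) = x • ω := by
      rw [← mul_smul, ← pow_two]; exact h12
    exact MulAction.injective x h'
  by_cases h13 : x ^ 3 • ω = x • ω
  · apply h01
    have h' : x ^ 2 • (x • ω) = x • ω := by
      rw [← mul_smul, ← pow_succ]; exact h13
    have h'' := smul_eq_of_pow_smul_eq' hcop (Or.inr (Or.inl rfl)) h'
    exact MulAction.injective x h''
  by_cases h23 : x ^ 3 • ω = x ^ 2 • ω
  · apply h01
    have h' : x ^ 2 • (x • ω) = x ^ 2 • ω := by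
      rw [← mul_smul, ← pow_succ]; exact h23
    exact MulAction.injective (x ^ 2) h'
  apply hy
  refine h4 y ω (x • ω) (x ^ 2 • ω) (x ^ 3 • ω)
    (fun e => h01 e.symm) (fun e => h02 e.symm) (fun e => h03 e.symm)
    (fun e => h12 e.symm) (fun e => h13 e.symm) (fun e => h23 e.symm)
    ?_ ?_ (hfix 2) (hfix 3)
  · simpa using hfix 0
  · simpa using hfix 1

private lemma qgroup_fix' (hcop : Nat.Coprime (Nat.card G) 6)
    (h4 : ∀ g : G, ∀ a b c d : Ω, a ≠ b → a ≠ c → a ≠ d → b ≠ c → b ≠ d → c ≠ d →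
        g • a = a → g • b = b → g • c = c → g • d = d → g = 1)
    {q : ℕ} (hq : q.Prime) {Q : Subgroup G}
    (hQp : IsPGroup q Q) {y : G} (hyQ : y ∈ Q) (hy1 : y ≠ 1) {a : Ω} (hya : y • a = a) :
    ∀ u ∈ Q, u • a = a := by
  haveI : Fact q.Prime := ⟨hq⟩
  haveI : Nontrivial Q := by
    refine ⟨⟨y, hyQ⟩, 1, ?_⟩
    simp only [ne_eq, Subtype.ext_iff, OneMemClass.coe_one]
    exact hy1
  haveI := hQp.center_nontrivial
  obtain ⟨z, hz1⟩ := exists_ne (1 : Subgroup.center Q)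
  have hz'Q : ((z : Q) : G) ∈ Q := (z : Q).2
  set z' : G := ((z : Q) : G) with hz'def
  have hz'1 : z' ≠ 1 := by
    intro h
    apply hz1
    rw [← Subtype.coe_inj, ← Subtype.coe_inj]
    simpa [hz'def] using h
  have hcom : ∀ u : G, u ∈ Q → Commute u z' := by
    intro u hu
    have h' := Subgroup.mem_center_iff.mp z.2 ⟨u, hu⟩
    have := congrArg (Subtype.val) h'
    exact (by simpa using this : u * z' = z' * u)
  have hz'a : z' • a = a := by
    apply core_fix' hcop h4 hy1
    intro i
    rw [← mul_smul, ((hcom y hyQ).pow_right i).eq, mul_smul, hya]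
  intro u hu
  apply core_fix' hcop h4 hz'1
  intro i
  rw [← mul_smul, (((hcom u hu).symm).pow_right i).eq, mul_smul, hz'a]

private lemma norm_fix' (hcop : Nat.Coprime (Nat.card G) 6)
    (h4 : ∀ g : G, ∀ a b c d : Ω, a ≠ b → a ≠ c → a ≠ d → b ≠ c → b ≠ d → c ≠ d →
        g • a = a → g • b = b → g • c = c → g • d = d → g = 1)
    {Q : Subgroup G} {z : G} (hzQ : z ∈ Q) (hz1 : z ≠ 1)
    {a : Ω} (hQa : ∀ u ∈ Q, u • a = a) {m : G}
    (hm : ∀ w ∈ Q, m⁻¹ * w * m ∈ Q) : m • a = a := by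
  have hmi : ∀ i : ℕ, (m ^ i)⁻¹ * z * m ^ i ∈ Q := by
    intro i
    induction i with
    | zero => simpa using hzQ
    | succ n ih =>
      have h' := hm _ ih
      rw [pow_succ]
      have heq : (m ^ n * m)⁻¹ * z * (m ^ n * m) = m⁻¹ * ((m ^ n)⁻¹ * z * m ^ n) * m := by
        group
      rw [heq]; exact h'
  apply core_fix' hcop h4 hz1
  intro i
  have h1 : z • (m ^ i • a) = (m ^ i) • (((m ^ i)⁻¹ * z * m ^ i) • a) := by
    rw [← mul_smul, ← mul_smul]
    congr 1
    group
  rw [h1, hQa _ (hmi i)]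

end FrobeniusAux

/-- Let `G` be a finite group of order coprime to `6` acting faithfully, transitively and
nonregularly on a finite set `Ω`, such that every element fixing at least four distinct
points is the identity. Then the action is a Frobenius action: some point stabilizer is
nontrivial and every nontrivial element of `G` fixes at most one point of `Ω`. -/
theorem frobenius_of_coprime_six (G : Type*) [Group G] [Finite G]
    (Ω : Type*) [Finite Ω] [MulAction G Ω]
    (hcop : Nat.Coprime (Nat.card G) 6)
    (htrans : MulAction.IsPretransitive G Ω)
    (hfaithful : ∀ g : G, (∀ ω : Ω, g • ω = ω) → g = 1)
    (hnonreg : ∃ ω : Ω, MulAction.stabilizer G ω ≠ ⊥)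
    (h4 : ∀ g : G, ∀ a b c d : Ω, a ≠ b → a ≠ c → a ≠ d → b ≠ c → b ≠ d → c ≠ d →
        g • a = a → g • b = b → g • c = c → g • d = d → g = 1) :
    (∃ ω : Ω, MulAction.stabilizer G ω ≠ ⊥) ∧
    ∀ g : G, g ≠ 1 → ∀ a b : Ω, g • a = a → g • b = b → a = b := by
  refine ⟨hnonreg, ?_⟩
  intro g hg a b hga hgb
  by_contra hab
  -- set up a prime q and an element y of order q fixing both a and b
  have hog1 : orderOf g ≠ 1 := fun h => hg (orderOf_eq_one_iff.mp h)
  have hog0 : orderOf g ≠ 0 := (orderOf_pos g).ne'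
  set q := (orderOf g).minFac with hq_def
  have hq : q.Prime := Nat.minFac_prime hog1
  haveI : Fact q.Prime := ⟨hq⟩
  have hqd : q ∣ orderOf g := Nat.minFac_dvd _
  set y := g ^ (orderOf g / q) with hy_def
  have hyo : orderOf y = q := orderOf_pow_orderOf_div hog0 hqd
  have hy1 : y ≠ 1 := by
    intro h
    rw [h, orderOf_one] at hyo
    exact hq.one_lt.ne' hyo.symm
  have hya : y • a = a := pow_smul_fix' hga _
  have hyb : y • b = b := pow_smul_fix' hgb _
  set H := MulAction.stabilizer G b with hH_def
  have hyH : y ∈ H := MulAction.mem_stabilizer_iff.mpr hyb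
  haveI : Finite (Sylow q H) :=
    Finite.of_injective (fun P : Sylow q H => (P : Set H)) SetLike.coe_injective
  -- a Sylow q-subgroup of H containing y
  have hzp : IsPGroup q (Subgroup.zpowers (⟨y, hyH⟩ : H)) := by
    apply IsPGroup.of_card (n := 1)
    rw [Nat.card_zpowers, pow_one]
    have hcoe : orderOf (H.subtype ⟨y, hyH⟩) = orderOf (⟨y, hyH⟩ : H) :=
      orderOf_injective H.subtype Subtype.coe_injective _
    have : H.subtype (⟨y, hyH⟩ : H) = y := rfl
    rw [this] at hcoe
    rw [← hcoe, hyo]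
  obtain ⟨A, hA⟩ := hzp.exists_le_sylow
  set Q : Subgroup G := Subgroup.map H.subtype (A : Subgroup H) with hQ_def
  have hyQ : y ∈ Q := Subgroup.mem_map.mpr ⟨⟨y, hyH⟩, hA (Subgroup.mem_zpowers _), rfl⟩
  have hQH : Q ≤ H := by
    rintro u hu
    obtain ⟨v, hv, rfl⟩ := Subgroup.mem_map.mp hu
    exact v.2
  have hQp : IsPGroup q Q := A.2.map H.subtype
  have hQa : ∀ u ∈ Q, u • a = a := qgroup_fix' hcop h4 hq hQp hyQ hy1 hya
  obtain ⟨t, ht⟩ := htrans.exists_smul_eq a b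
  -- the conjugate subgroup t Q t⁻¹, also inside H
  set Q' : Subgroup G := Subgroup.map (MulAut.conj t).toMonoidHom Q with hQ'_def
  have hQ'mem : ∀ w ∈ Q, t * w * t⁻¹ ∈ Q' := by
    intro w hw
    exact Subgroup.mem_map.mpr ⟨w, hw, rfl⟩
  have htb : t⁻¹ • b = a := by rw [← ht, inv_smul_smul]
  have hQ'H : Q' ≤ H := by
    rintro u hu
    obtain ⟨w, hw, rfl⟩ := Subgroup.mem_map.mp hu
    have h1 : (MulAut.conj t).toMonoidHom w = t * w * t⁻¹ := rfl
    rw [hH_def]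
    rw [MulAction.mem_stabilizer_iff, h1, mul_smul, mul_smul, htb, hQa w hw, ht]
  have hQ'p : IsPGroup q Q' := hQp.map _
  have hBp : IsPGroup q (Q'.subgroupOf H) := by
    intro x
    obtain ⟨k, hk⟩ := hQ'p ((Subgroup.subgroupOfEquivOfLe hQ'H) x)
    exact ⟨k, (Subgroup.subgroupOfEquivOfLe hQ'H).injective (by rw [map_pow, hk, map_one])⟩
  obtain ⟨R, hR⟩ := hBp.exists_le_sylow
  obtain ⟨k, hk⟩ := MulAction.exists_smul_eq H R A
  set m : G := (k : G) * t with hm_def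
  have hfwd : ∀ w ∈ Q, m * w * m⁻¹ ∈ Q := by
    intro w hw
    have hv : t * w * t⁻¹ ∈ Q' := hQ'mem w hw
    have hvH : t * w * t⁻¹ ∈ H := hQ'H hv
    have hvB : (⟨t * w * t⁻¹, hvH⟩ : H) ∈ (Q'.subgroupOf H) := by
      simpa [Subgroup.mem_subgroupOf] using hv
    have hvR : (⟨t * w * t⁻¹, hvH⟩ : H) ∈ (R : Subgroup H) := hR hvB
    have h5 : MulAut.conj k • (⟨t * w * t⁻¹, hvH⟩ : H) ∈ MulAut.conj k • (R : Set H) :=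
      Set.smul_mem_smul_set hvR
    rw [← Sylow.coe_smul, hk] at h5
    have h6 : (k * ⟨t * w * t⁻¹, hvH⟩ * k⁻¹ : H) ∈ (A : Subgroup H) := by
      have h5' : (k * ⟨t * w * t⁻¹, hvH⟩ * k⁻¹ : H) ∈ A := by
        simpa [MulAut.smul_def, MulAut.conj_apply] using h5
      exact h5'
    refine Subgroup.mem_map.mpr ⟨_, h6, ?_⟩
    show ((k * ⟨t * w * t⁻¹, hvH⟩ * k⁻¹ : H) : G) = m * w * m⁻¹
    push_cast
    rw [hm_def]
    group
  have hrev : ∀ w ∈ Q, m⁻¹ * w * m ∈ Q := by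
    have hinj : Function.Injective (fun w : G => m * w * m⁻¹) := by
      intro w1 w2 h
      exact mul_left_cancel (mul_right_cancel h)
    have himg : (fun w : G => m * w * m⁻¹) '' (Q : Set G) = (Q : Set G) := by
      apply Set.eq_of_subset_of_ncard_le
      · rintro _ ⟨w, hw, rfl⟩
        exact hfwd w hw
      · rw [Set.ncard_image_of_injective _ hinj]
      · exact Set.toFinite _
    intro w hw
    have hw' : w ∈ (fun w : G => m * w * m⁻¹) '' (Q : Set G) := by
      rw [himg]; exact hw
    obtain ⟨u, hu, he⟩ := hw'
    have : m⁻¹ * w * m = u := by rw [← he]; group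
    rw [this]; exact hu
  have hma : m • a = a := norm_fix' hcop h4 hyQ hy1 hQa hrev
  have hmb : m • a = b := by
    rw [hm_def, mul_smul, ht]
    exact MulAction.mem_stabilizer_iff.mp k.2
  exact hab (by rw [← hma]; exact hmb)
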